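/- Let w : ℝᴺ → ℝᴺ be continuous, let K > 0 and ε > 0, and suppose that Q_w(a, b) ≥ ε for all a, b ∈ ℝᴺ with ‖a − b‖ ≥ K. Then for every natural number n and all x, y ∈ ℝᴺ with ‖x − y‖ ≥ n·K one has Q_w(x, y) ≥ n·ε; consequently, Q_w(x, y) ≥ (ε/K)·‖x − y‖ − ε for all x, y ∈ ℝᴺ. (Chaining argument: a uniform positive lower bound on the quasipotential at scale K forces at least linear growth of the quasipotential in the distance between the endpoints.) -/

import Mathlib

open MeasureTheory Set

/-- A path `φ : [T₁,T₂] → ℝᴺ` is admissible with derivative `g` if `g` is measurable with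
square-integrable norm on `[T₁,T₂]` and `φ(t) = φ(T₁) + ∫_{T₁}^t g(s) ds` on `[T₁,T₂]`. -/
def IsAdmissiblePath (N : ℕ) (T₁ T₂ : ℝ)
    (φ g : ℝ → EuclideanSpace ℝ (Fin N)) : Prop :=
  Measurable g ∧
  MeasureTheory.IntegrableOn (fun t => ‖g t‖ ^ 2) (Set.Icc T₁ T₂) ∧
  ∀ t ∈ Set.Icc T₁ T₂, φ t = φ T₁ + ∫ s in T₁..t, g s

/-- The Freidlin–Wentzell quasipotential of a vector field `u` between `x` and `y`. -/
noncomputable def quasipotential (N : ℕ)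
    (u : EuclideanSpace ℝ (Fin N) → EuclideanSpace ℝ (Fin N))
    (x y : EuclideanSpace ℝ (Fin N)) : ℝ :=
  sInf {a : ℝ | ∃ T : ℝ, 0 < T ∧ ∃ φ g : ℝ → EuclideanSpace ℝ (Fin N),
    IsAdmissiblePath N 0 T φ g ∧ φ 0 = x ∧ φ T = y ∧
    a = (1 / 4) * ∫ t in Set.Icc 0 T, ‖g t - u (φ t)‖ ^ 2}


def QSet (N : ℕ) (u : EuclideanSpace ℝ (Fin N) → EuclideanSpace ℝ (Fin N))
    (x y : EuclideanSpace ℝ (Fin N)) : Set ℝ :=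
  {a : ℝ | ∃ T : ℝ, 0 < T ∧ ∃ φ g : ℝ → EuclideanSpace ℝ (Fin N),
    IsAdmissiblePath N 0 T φ g ∧ φ 0 = x ∧ φ T = y ∧
    a = (1 / 4) * ∫ t in Set.Icc 0 T, ‖g t - u (φ t)‖ ^ 2}

set_option maxHeartbeats 1000000

variable {N : ℕ}

lemma QSet_nonneg {u : EuclideanSpace ℝ (Fin N) → EuclideanSpace ℝ (Fin N)}
    {x y : EuclideanSpace ℝ (Fin N)} {a : ℝ} (ha : a ∈ QSet N u x y) : 0 ≤ a := by
  obtain ⟨T, hT, φ, g, hp, h0, hT2, rfl⟩ := ha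
  have : 0 ≤ ∫ t in Set.Icc 0 T, ‖g t - u (φ t)‖ ^ 2 :=
    integral_nonneg fun t => by positivity
  linarith

lemma QSet_bddBelow (u : EuclideanSpace ℝ (Fin N) → EuclideanSpace ℝ (Fin N))
    (x y : EuclideanSpace ℝ (Fin N)) : BddBelow (QSet N u x y) :=
  ⟨0, fun _ ha => QSet_nonneg ha⟩

lemma QSet_nonempty (u : EuclideanSpace ℝ (Fin N) → EuclideanSpace ℝ (Fin N))
    (x y : EuclideanSpace ℝ (Fin N)) : (QSet N u x y).Nonempty := by
  refine ⟨_, 1, one_pos, fun t => x + t • (y - x), fun _ => y - x, ⟨measurable_const,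
    (integrableOn_const measure_Icc_lt_top.ne), fun t ht => ?_⟩, by simp, by simp, rfl⟩
  simp [intervalIntegral.integral_const, smul_sub]

lemma gInt {T : ℝ} {φ g : ℝ → EuclideanSpace ℝ (Fin N)}
    (hp : IsAdmissiblePath N 0 T φ g) : IntegrableOn g (Icc 0 T) := by
  obtain ⟨hm, hint, _⟩ := hp
  refine Integrable.mono' (g := fun t => 1 + ‖g t‖ ^ 2)
    (show IntegrableOn (fun t => (1:ℝ) + ‖g t‖ ^ 2) (Icc 0 T) volume from
      (integrableOn_const (C := (1:ℝ)) measure_Icc_lt_top.ne).add hint)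
    hm.aestronglyMeasurable (Filter.Eventually.of_forall fun t =>
      show ‖g t‖ ≤ 1 + ‖g t‖ ^ 2 by nlinarith [sq_nonneg (‖g t‖ - 1)])

lemma phiCont {T : ℝ} (hT : 0 ≤ T) {φ g : ℝ → EuclideanSpace ℝ (Fin N)}
    (hp : IsAdmissiblePath N 0 T φ g) : ContinuousOn φ (Icc 0 T) := by
  have hInt : IntegrableOn g (uIcc 0 T) := (uIcc_of_le hT).symm ▸ gInt hp
  have hc : ContinuousOn (fun t => φ 0 + ∫ s in (0:ℝ)..t, g s) (Icc 0 T) := by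
    have h2 : ContinuousOn (fun t => φ 0 + ∫ s in (0:ℝ)..t, g s) (uIcc 0 T) :=
      continuousOn_const.add (intervalIntegral.continuousOn_primitive_interval hInt)
    rwa [uIcc_of_le hT] at h2
  exact hc.congr hp.2.2

lemma actionInt {T : ℝ} (hT : 0 ≤ T) {φ g : ℝ → EuclideanSpace ℝ (Fin N)}
    (hp : IsAdmissiblePath N 0 T φ g)
    (w : EuclideanSpace ℝ (Fin N) → EuclideanSpace ℝ (Fin N)) (hw : Continuous w) :
    IntegrableOn (fun t => ‖g t - w (φ t)‖ ^ 2) (Icc 0 T) := by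
  have hwφ : ContinuousOn (fun t => w (φ t)) (Icc 0 T) := hw.comp_continuousOn (phiCont hT hp)
  obtain ⟨C, hC⟩ := isCompact_Icc.exists_bound_of_continuousOn hwφ
  have hφm : AEStronglyMeasurable φ (volume.restrict (Icc 0 T)) :=
    (phiCont hT hp).aestronglyMeasurable measurableSet_Icc
  have hmeas : AEStronglyMeasurable (fun t => ‖g t - w (φ t)‖ ^ 2)
      (volume.restrict (Icc 0 T)) := by
    have h1 : AEStronglyMeasurable (fun t => g t - w (φ t)) (volume.restrict (Icc 0 T)) :=
      hp.1.aestronglyMeasurable.sub (hw.comp_aestronglyMeasurable hφm)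
    simpa [pow_two, Pi.mul_def] using h1.norm.mul h1.norm
  have hbd : IntegrableOn (fun t => 2 * ‖g t‖ ^ 2 + 2 * C ^ 2) (Icc 0 T) :=
    (hp.2.1.const_mul 2).add (integrableOn_const measure_Icc_lt_top.ne)
  refine hbd.mono' hmeas ?_
  rw [ae_restrict_iff' measurableSet_Icc]
  refine Filter.Eventually.of_forall fun t ht => ?_
  have h1 : ‖g t - w (φ t)‖ ≤ ‖g t‖ + C :=
    (norm_sub_le _ _).trans (by linarith [hC t ht])
  have h2 : (0:ℝ) ≤ ‖g t - w (φ t)‖ := norm_nonneg _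
  rw [Real.norm_of_nonneg (by positivity)]
  nlinarith [sq_nonneg (‖g t‖ - C), mul_self_le_mul_self h2 h1, sq_nonneg (‖g t‖ + C)]

lemma chain (w : EuclideanSpace ℝ (Fin N) → EuclideanSpace ℝ (Fin N)) (hw : Continuous w)
    (K ε : ℝ) (hK : 0 < K) (hε : 0 < ε)
    (h : ∀ a b : EuclideanSpace ℝ (Fin N), K ≤ ‖a - b‖ → ε ≤ sInf (QSet N w a b)) :
    ∀ (n : ℕ) (x y : EuclideanSpace ℝ (Fin N)),
      (n : ℝ) * K ≤ ‖x - y‖ → (n : ℝ) * ε ≤ sInf (QSet N w x y) := by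
  intro n
  induction n with
  | zero =>
    intro x y _
    simpa using Real.sInf_nonneg fun a ha => QSet_nonneg ha
  | succ n IH =>
    intro x y hxy
    rcases Nat.eq_zero_or_pos n with rfl | hn
    · simpa using h x y (by simpa using hxy)
    have hn1 : (1:ℝ) ≤ (n:ℝ) := by exact_mod_cast hn
    refine le_csInf (QSet_nonempty w x y) fun a ha => ?_
    obtain ⟨T, hT, φ, g, hp, hφ0, hφT, rfl⟩ := ha
    set F : ℝ → ℝ := fun t => ‖g t - w (φ t)‖ ^ 2 with hF
    -- find the hitting time t₁ of the sphere of radius K around x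
    have hcont : ContinuousOn (fun t => ‖φ t - x‖) (Icc 0 T) :=
      ((phiCont hT.le hp).sub continuousOn_const).norm
    have hyx : ((n:ℝ) + 1) * K ≤ ‖φ T - x‖ := by
      rw [hφT, norm_sub_rev]; push_cast at hxy; linarith
    have hKmem : K ∈ Icc ‖φ 0 - x‖ ‖φ T - x‖ := by
      constructor
      · rw [hφ0]; simp [hK.le]
      · nlinarith
    obtain ⟨t₁, ht₁, hft₁⟩ := intermediate_value_Icc hT.le hcont hKmem
    replace hft₁ : ‖φ t₁ - x‖ = K := hft₁
    have ht₁0 : 0 < t₁ := by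
      rcases lt_or_eq_of_le ht₁.1 with h' | h'
      · exact h'
      · exfalso; rw [← h'] at hft₁; rw [hφ0] at hft₁; simp at hft₁; linarith
    have ht₁T : t₁ < T := by
      rcases lt_or_eq_of_le ht₁.2 with h' | h'
      · exact h'
      · exfalso; rw [h'] at hft₁; rw [hft₁] at hyx; nlinarith
    set z := φ t₁ with hz
    have hxz : K ≤ ‖x - z‖ := by rw [norm_sub_rev]; exact hft₁.ge
    have hzy : (n:ℝ) * K ≤ ‖z - y‖ := by
      have htri : ‖x - y‖ ≤ ‖x - z‖ + ‖z - y‖ := norm_sub_le_norm_sub_add_norm_sub x z y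
      have hxzK : ‖x - z‖ = K := by rw [norm_sub_rev]; exact hft₁
      push_cast at hxy; linarith
    -- first piece
    have hsub1 : Icc (0:ℝ) t₁ ⊆ Icc 0 T := Icc_subset_Icc_right ht₁T.le
    have hmem1 : (1/4) * ∫ t in Icc 0 t₁, F t ∈ QSet N w x z :=
      ⟨t₁, ht₁0, φ, g, ⟨hp.1, hp.2.1.mono_set hsub1, fun t ht => hp.2.2 t (hsub1 ht)⟩,
        hφ0, rfl, rfl⟩
    have h1 : ε ≤ (1/4) * ∫ t in Icc 0 t₁, F t :=
      (h x z hxz).trans (csInf_le (QSet_bddBelow w x z) hmem1)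
    -- second piece: shifted path
    have hTt : (0:ℝ) ≤ T - t₁ := by linarith
    have hgi : ∀ u v : ℝ, 0 ≤ u → u ≤ v → v ≤ T → IntervalIntegrable g volume u v := by
      intro u v hu huv hv
      exact (intervalIntegrable_iff_integrableOn_Icc_of_le huv).2
        ((gInt hp).mono_set (Icc_subset_Icc hu hv))
    have hadm2 : IsAdmissiblePath N 0 (T - t₁) (fun r => φ (t₁ + r)) (fun r => g (t₁ + r)) := by
      refine ⟨hp.1.comp (measurable_id.const_add t₁), ?_, ?_⟩
      · have h2i : IntervalIntegrable (fun t => ‖g t‖ ^ 2) volume t₁ T :=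
          (intervalIntegrable_iff_integrableOn_Icc_of_le ht₁T.le).2
            (hp.2.1.mono_set (Icc_subset_Icc_left ht₁0.le))
        have h3 := h2i.comp_add_left t₁
        rw [sub_self] at h3
        exact (intervalIntegrable_iff_integrableOn_Icc_of_le hTt).1 h3
      · intro r hr
        obtain ⟨hr0, hrT⟩ := hr
        show φ (t₁ + r) = φ (t₁ + 0) + ∫ s in (0:ℝ)..r, g (t₁ + s)
        have hmem : t₁ + r ∈ Icc (0:ℝ) T := ⟨by linarith, by linarith⟩
        have e1 : φ (t₁ + r) = φ 0 + ∫ s in (0:ℝ)..(t₁ + r), g s := hp.2.2 _ hmem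
        have e2 : φ (t₁ + 0) = φ 0 + ∫ s in (0:ℝ)..t₁, g s := by
          rw [add_zero]; exact hp.2.2 t₁ ⟨ht₁0.le, ht₁T.le⟩
        have e3 : (∫ s in (0:ℝ)..t₁, g s) + ∫ s in t₁..(t₁ + r), g s
            = ∫ s in (0:ℝ)..(t₁ + r), g s :=
          intervalIntegral.integral_add_adjacent_intervals
            (hgi 0 t₁ le_rfl ht₁0.le ht₁T.le) (hgi t₁ (t₁ + r) ht₁0.le (by linarith) (by linarith))
        have e4 : (∫ s in (0:ℝ)..r, g (t₁ + s)) = ∫ s in t₁..(t₁ + r), g s := by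
          simpa using intervalIntegral.integral_comp_add_left (a := 0) (b := r) g t₁
        rw [e1, e2, e4, ← e3, add_assoc]
    have hend2 : φ (t₁ + (T - t₁)) = y := by rw [add_sub_cancel]; exact hφT
    have hstart2 : φ (t₁ + 0) = z := by rw [add_zero]
    have hmem2 : (1/4) * ∫ r in Icc 0 (T - t₁), ‖g (t₁ + r) - w (φ (t₁ + r))‖ ^ 2
        ∈ QSet N w z y :=
      ⟨T - t₁, by linarith, fun r => φ (t₁ + r), fun r => g (t₁ + r), hadm2, hstart2, hend2, rfl⟩
    have h2 : (n:ℝ) * ε ≤ (1/4) * ∫ r in Icc 0 (T - t₁), ‖g (t₁ + r) - w (φ (t₁ + r))‖ ^ 2 :=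
      (IH z y hzy).trans (csInf_le (QSet_bddBelow w z y) hmem2)
    -- translate the second piece
    have hFint : IntegrableOn F (Icc 0 T) := actionInt hT.le hp w hw
    have hFi : ∀ u v : ℝ, 0 ≤ u → u ≤ v → v ≤ T → IntervalIntegrable F volume u v := by
      intro u v hu huv hv
      exact (intervalIntegrable_iff_integrableOn_Icc_of_le huv).2
        (hFint.mono_set (Icc_subset_Icc hu hv))
    have hEq : (∫ r in Icc 0 (T - t₁), ‖g (t₁ + r) - w (φ (t₁ + r))‖ ^ 2)
        = ∫ t in Icc t₁ T, F t := by
      rw [integral_Icc_eq_integral_Ioc, integral_Icc_eq_integral_Ioc,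
        ← intervalIntegral.integral_of_le hTt, ← intervalIntegral.integral_of_le ht₁T.le]
      have h5 := intervalIntegral.integral_comp_add_left (a := (0:ℝ)) (b := T - t₁) F t₁
      rw [add_zero, add_sub_cancel] at h5
      exact h5
    -- additivity
    have hdisj : Disjoint (Icc (0:ℝ) t₁) (Ioc t₁ T) := by
      refine Set.disjoint_left.2 fun u hu hu' => ?_
      exact absurd hu.2 (not_le.2 hu'.1)
    have hsplit : (∫ t in Icc 0 T, F t) = (∫ t in Icc 0 t₁, F t) + ∫ t in Icc t₁ T, F t := by
      rw [← Icc_union_Ioc_eq_Icc ht₁0.le ht₁T.le,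
        setIntegral_union hdisj measurableSet_Ioc (hFint.mono_set hsub1)
          (hFint.mono_set fun u hu => ⟨by linarith [hu.1, ht₁0.le], hu.2⟩),
        integral_Icc_eq_integral_Ioc, integral_Icc_eq_integral_Ioc]
    rw [hsplit]
    rw [hEq] at h2
    push_cast
    linarith

/-- Chaining: if `Q_w(a,b) ≥ ε` whenever `‖a − b‖ ≥ K`, then
`Q_w(x,y) ≥ n·ε` whenever `‖x − y‖ ≥ n·K`, and consequently
`Q_w(x,y) ≥ (ε/K)·‖x − y‖ − ε` for all `x, y`. -/
theorem quasipotential_linear_growth (N : ℕ) (hN : 1 ≤ N)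
    (w : EuclideanSpace ℝ (Fin N) → EuclideanSpace ℝ (Fin N)) (hw : Continuous w)
    (K ε : ℝ) (hK : 0 < K) (hε : 0 < ε)
    (h : ∀ a b : EuclideanSpace ℝ (Fin N), K ≤ ‖a - b‖ → ε ≤ quasipotential N w a b) :
    (∀ (n : ℕ) (x y : EuclideanSpace ℝ (Fin N)),
      (n : ℝ) * K ≤ ‖x - y‖ → (n : ℝ) * ε ≤ quasipotential N w x y) ∧
    (∀ x y : EuclideanSpace ℝ (Fin N),
      ε / K * ‖x - y‖ - ε ≤ quasipotential N w x y) := by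
  have hQ : ∀ x y : EuclideanSpace ℝ (Fin N),
      quasipotential N w x y = sInf (QSet N w x y) := fun _ _ => rfl
  have h' : ∀ a b : EuclideanSpace ℝ (Fin N), K ≤ ‖a - b‖ → ε ≤ sInf (QSet N w a b) := by
    intro a b hab; rw [← hQ]; exact h a b hab
  have part1 : ∀ (n : ℕ) (x y : EuclideanSpace ℝ (Fin N)),
      (n : ℝ) * K ≤ ‖x - y‖ → (n : ℝ) * ε ≤ quasipotential N w x y := by
    intro n x y hxy; rw [hQ]; exact chain w hw K ε hK hε h' n x y hxy
  refine ⟨part1, fun x y => ?_⟩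
  set n := ⌊‖x - y‖ / K⌋₊ with hn
  have h0 : 0 ≤ ‖x - y‖ / K := by positivity
  have h1 : (n : ℝ) ≤ ‖x - y‖ / K := Nat.floor_le h0
  have h2 : ‖x - y‖ / K < n + 1 := Nat.lt_floor_add_one _
  have h3 : (n : ℝ) * K ≤ ‖x - y‖ := (le_div_iff₀ hK).1 h1
  have h4 := part1 n x y h3
  have h5 : ‖x - y‖ < ((n : ℝ) + 1) * K := (div_lt_iff₀ hK).1 h2
  have h6 : ε / K * ‖x - y‖ ≤ ε / K * (((n : ℝ) + 1) * K) :=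
    mul_le_mul_of_nonneg_left h5.le (div_pos hε hK).le
  have h7 : ε / K * (((n : ℝ) + 1) * K) = ((n : ℝ) + 1) * ε := by
    field_simp
  linarith
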